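/- arXiv:math/0409494 — 2 statements merged into one kernel-verified Lean document; each statement's English description precedes it below -/
import Mathlib

section
/- Let X be a closed subspace of a Hilbert space H and let Π be an orthogonal projection on H. Then the range of Π decomposes as the orthogonal direct sum Π H = clos(Π X) ⊕ (X^⊥ ∩ Π H). -/
/-- If `X` is a closed subspace of a Hilbert space `H` and `Π` is an orthogonal
projection on `H`, then `Π H = clos(Π X) ⊕ (X^⊥ ∩ Π H)` (orthogonal direct sum). -/
theorem range_proj_decomp {H : Type*}
    [NormedAddCommGroup H] [InnerProductSpace ℂ H] [CompleteSpace H]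
    (X : Submodule ℂ H) (hX : IsClosed (X : Set H))
    (P : H →L[ℂ] H) (hP : IsIdempotentElem P) (hPsa : IsSelfAdjoint P) :
    (∀ u ∈ (X.map (P : H →ₗ[ℂ] H)).topologicalClosure,
        ∀ v ∈ Xᗮ ⊓ LinearMap.range (P : H →ₗ[ℂ] H), (inner ℂ u v : ℂ) = 0) ∧
    (X.map (P : H →ₗ[ℂ] H)).topologicalClosure ⊔ (Xᗮ ⊓ LinearMap.range (P : H →ₗ[ℂ] H))
      = LinearMap.range (P : H →ₗ[ℂ] H) := by
  have hsym : (P : H →ₗ[ℂ] H).IsSymmetric :=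
    (ContinuousLinearMap.isSelfAdjoint_iff_isSymmetric).mp hPsa
  -- P fixes its range
  have hfix : ∀ v, v ∈ LinearMap.range (P : H →ₗ[ℂ] H) → P v = v := by
    rintro v ⟨w, rfl⟩
    have := congrArg (fun (Q : H →L[ℂ] H) => Q w) hP
    simpa using this
  have hfix' : ∀ v ∈ LinearMap.range (P : H →ₗ[ℂ] H), (P : H →ₗ[ℂ] H) v = v := hfix
  -- orthogonality of P X and Xᗮ ⊓ range P
  have horth : ∀ u ∈ X.map (P : H →ₗ[ℂ] H), ∀ v ∈ Xᗮ ⊓ LinearMap.range (P : H →ₗ[ℂ] H),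
      (inner ℂ u v : ℂ) = 0 := by
    rintro u ⟨x, hx, rfl⟩ v ⟨hv1, hv2⟩
    have h := hsym x v
    rw [hfix' v hv2] at h
    rw [h]
    exact Submodule.inner_right_of_mem_orthogonal hx hv1
  -- hence map ≤ (Xᗮ ⊓ range P)ᗮ, a closed submodule
  have hle : X.map (P : H →ₗ[ℂ] H) ≤ (Xᗮ ⊓ LinearMap.range (P : H →ₗ[ℂ] H))ᗮ := by
    intro u hu
    rw [Submodule.mem_orthogonal]
    intro v hv
    have := horth u hu v hv
    rwa [← inner_eq_zero_symm] at this
  have horthC : ∀ u ∈ (X.map (P : H →ₗ[ℂ] H)).topologicalClosure,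
      ∀ v ∈ Xᗮ ⊓ LinearMap.range (P : H →ₗ[ℂ] H), (inner ℂ u v : ℂ) = 0 := by
    intro u hu v hv
    have hu' : u ∈ (Xᗮ ⊓ LinearMap.range (P : H →ₗ[ℂ] H))ᗮ :=
      Submodule.topologicalClosure_minimal _ hle (Submodule.isClosed_orthogonal _) hu
    have := (Submodule.mem_orthogonal _ u).mp hu' v hv
    rwa [← inner_eq_zero_symm] at this
  refine ⟨horthC, ?_⟩
  -- range P is closed
  set M := (X.map (P : H →ₗ[ℂ] H)).topologicalClosure with hM
  have hRclosed : IsClosed (LinearMap.range (P : H →ₗ[ℂ] H) : Set H) := by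
    have : (LinearMap.range (P : H →ₗ[ℂ] H) : Set H) = {x | P x = x} := by
      ext x
      constructor
      · intro hx; exact hfix x hx
      · intro hx; exact ⟨x, hx⟩
    rw [this]
    exact isClosed_eq (P.continuous) continuous_id
  have hmapleR : X.map (P : H →ₗ[ℂ] H) ≤ LinearMap.range (P : H →ₗ[ℂ] H) := by
    rintro u ⟨x, _, rfl⟩; exact ⟨x, rfl⟩
  have hMleR : M ≤ LinearMap.range (P : H →ₗ[ℂ] H) :=
    Submodule.topologicalClosure_minimal _ hmapleR hRclosed
  apply le_antisymm
  · exact sup_le hMleR inf_le_right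
  · intro w hw
    haveI : CompleteSpace M := by
      have : IsClosed (M : Set H) := Submodule.isClosed_topologicalClosure _
      exact this.completeSpace_coe
    obtain ⟨m, hm, z, hz, rfl⟩ := Submodule.exists_add_mem_mem_orthogonal (K := M) w
    refine Submodule.add_mem_sup hm ?_
    have hzR : z ∈ LinearMap.range (P : H →ₗ[ℂ] H) := by
      have hmR : m ∈ LinearMap.range (P : H →ₗ[ℂ] H) := hMleR hm
      have : m + z - m ∈ LinearMap.range (P : H →ₗ[ℂ] H) := Submodule.sub_mem _ hw hmR
      simpa using this
    refine ⟨?_, hzR⟩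
    intro x hx
    have hPx : ((P : H →ₗ[ℂ] H) x) ∈ M :=
      Submodule.le_topologicalClosure _ (Submodule.mem_map_of_mem hx)
    have h1 : (inner ℂ (P x : H) z : ℂ) = 0 := hz _ hPx
    have h2 : (inner ℂ x ((P : H →ₗ[ℂ] H) z) : ℂ) = 0 := by rw [← hsym x z]; exact h1
    have hzz : (P : H →ₗ[ℂ] H) z = z := hfix' z hzR
    rwa [hzz] at h2
  done
end

section
/- Green's formula on the disk: if u is a C² function on a neighborhood of the closed unit disk, then ∫_𝕋 u dm − u(0) = ∫_𝔻 Δ̃u dμ, where Δ̃ = (1/4)Δ, dm is normalized Lebesgue measure on 𝕋, and dμ = (2/π)log(1/|z|)dxdy. -/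
open MeasureTheory Set Complex intervalIntegral
open scoped Real Topology

/-- The (unnormalized) Laplacian of a real-valued function on `ℂ`. -/
noncomputable def lap (u : ℂ → ℝ) (z : ℂ) : ℝ :=
  fderiv ℝ (fun w => fderiv ℝ u w 1) z 1 +
    fderiv ℝ (fun w => fderiv ℝ u w Complex.I) z Complex.I

namespace GreenAux

/-- The point `e^{iθ}` on the unit circle. -/
noncomputable def cE (θ : ℝ) : ℂ := Complex.exp (θ * Complex.I)

lemma cE_norm (θ : ℝ) : ‖cE θ‖ = 1 := by
  simp [cE, Complex.norm_exp]

lemma cE_eq (θ : ℝ) : cE θ = (Real.cos θ : ℝ) • (1 : ℂ) + (Real.sin θ : ℝ) • Complex.I := by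
  simp only [cE, Complex.exp_mul_I, real_smul, Complex.ofReal_cos, Complex.ofReal_sin]
  ring

lemma I_mul_cE_eq (θ : ℝ) :
    Complex.I * cE θ = (-Real.sin θ : ℝ) • (1 : ℂ) + (Real.cos θ : ℝ) • Complex.I := by
  rw [cE_eq]
  simp only [real_smul, Complex.ofReal_neg]
  linear_combination (Real.sin θ : ℂ) * Complex.I_mul_I

/-- Rotation invariance: the "trace" of a bilinear form in the rotated basis. -/
lemma rotation_trace (T : ℂ →L[ℝ] ℂ →L[ℝ] ℝ) (θ : ℝ) :
    T (cE θ) (cE θ) + T (Complex.I * cE θ) (Complex.I * cE θ) =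
      T 1 1 + T Complex.I Complex.I := by
  have hpyth : Real.sin θ ^ 2 + Real.cos θ ^ 2 = 1 := Real.sin_sq_add_cos_sq θ
  rw [I_mul_cE_eq, cE_eq]
  simp only [map_add, _root_.map_smul, ContinuousLinearMap.add_apply,
    ContinuousLinearMap.coe_smul', Pi.smul_apply, smul_eq_mul]
  linear_combination ((T 1) 1 + (T Complex.I) Complex.I) * hpyth

section

variable {u : ℂ → ℝ} {U : Set ℂ}

lemma hasFDerivAt_u (hU : IsOpen U) (hu : ContDiffOn ℝ 2 u U) {z : ℂ} (hz : z ∈ U) :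
    HasFDerivAt u (fderiv ℝ u z) z :=
  ((hu.contDiffAt (hU.mem_nhds hz)).differentiableAt (by norm_num)).hasFDerivAt

lemma hasFDerivAt_f' (hU : IsOpen U) (hu : ContDiffOn ℝ 2 u U) {z : ℂ} (hz : z ∈ U) :
    HasFDerivAt (fderiv ℝ u) (fderiv ℝ (fderiv ℝ u) z) z :=
  ((((hu.contDiffAt (hU.mem_nhds hz)).fderiv_right (m := 1) (by norm_num)).differentiableAt
    (by norm_num))).hasFDerivAt

lemma contOn_f' (hU : IsOpen U) (hu : ContDiffOn ℝ 2 u U) :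
    ContinuousOn (fderiv ℝ u) U :=
  (hu.fderiv_of_isOpen hU (m := 1) (by norm_num)).continuousOn

lemma contOn_f'' (hU : IsOpen U) (hu : ContDiffOn ℝ 2 u U) :
    ContinuousOn (fderiv ℝ (fderiv ℝ u)) U :=
  (hu.fderiv_of_isOpen hU (m := 1) (by norm_num)).continuousOn_fderiv_of_isOpen hU le_rfl

lemma fderiv_apply_const (hU : IsOpen U) (hu : ContDiffOn ℝ 2 u U) {z : ℂ} (hz : z ∈ U)
    (v w : ℂ) :
    fderiv ℝ (fun x => fderiv ℝ u x v) z w = fderiv ℝ (fderiv ℝ u) z w v := by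
  have h := (hasFDerivAt_f' hU hu hz).clm_apply (hasFDerivAt_const v z)
  rw [h.fderiv]
  simp

lemma lap_eq (hU : IsOpen U) (hu : ContDiffOn ℝ 2 u U) {z : ℂ} (hz : z ∈ U) :
    lap u z = fderiv ℝ (fderiv ℝ u) z 1 1 + fderiv ℝ (fderiv ℝ u) z Complex.I Complex.I := by
  rw [lap, fderiv_apply_const hU hu hz, fderiv_apply_const hU hu hz]

lemma hasDerivAt_line (e : ℂ) (r : ℝ) : HasDerivAt (fun s : ℝ => (s : ℂ) * e) e r := by
  simpa [Complex.real_smul] using (hasDerivAt_id r).smul_const e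

lemma mem_cb {r θ : ℝ} (hr : |r| ≤ 1) : ((r : ℂ) * cE θ) ∈ Metric.closedBall (0:ℂ) 1 := by
  rw [Metric.mem_closedBall, dist_zero_right, norm_mul, cE_norm, mul_one,
    Complex.norm_real, Real.norm_eq_abs]
  exact hr

/-- The integrand for the radial part. -/
noncomputable def gA (u : ℂ → ℝ) (p : ℝ × ℝ) : ℝ :=
  (-Real.log p.1) * (fderiv ℝ u (p.1 * cE p.2) (cE p.2)
    + p.1 * fderiv ℝ (fderiv ℝ u) (p.1 * cE p.2) (cE p.2) (cE p.2))

/-- The integrand for the angular part. -/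
noncomputable def gB (u : ℂ → ℝ) (p : ℝ × ℝ) : ℝ :=
  (-Real.log p.1) * (p.1 * fderiv ℝ (fderiv ℝ u) (p.1 * cE p.2) (Complex.I * cE p.2)
      (Complex.I * cE p.2)
    - fderiv ℝ u (p.1 * cE p.2) (cE p.2))

lemma gA_add_gB (hU : IsOpen U) (hu : ContDiffOn ℝ 2 u U) {p : ℝ × ℝ}
    (hz : ((p.1 : ℂ) * cE p.2) ∈ U) :
    gA u p + gB u p = (-Real.log p.1) * (p.1 * lap u (p.1 * cE p.2)) := by
  rw [lap_eq hU hu hz, ← rotation_trace (fderiv ℝ (fderiv ℝ u) ((p.1 : ℂ) * cE p.2)) p.2]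
  simp only [gA, gB]
  ring

/-- Antiderivative in the radial direction. -/
noncomputable def Phi (u : ℂ → ℝ) (θ r : ℝ) : ℝ :=
  -(r * Real.log r) * (fderiv ℝ u (r * cE θ) (cE θ)) + u (r * cE θ)

lemma hasDerivAt_Phi (hU : IsOpen U) (hu : ContDiffOn ℝ 2 u U) {θ r : ℝ}
    (hz : ((r : ℂ) * cE θ) ∈ U) (hr : r ≠ 0) :
    HasDerivAt (Phi u θ) (gA u (r, θ)) r := by
  have h1 : HasDerivAt (fun s : ℝ => (s:ℂ) * cE θ) (cE θ) r := hasDerivAt_line _ r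
  have hD : HasDerivAt (fun s : ℝ => fderiv ℝ u ((s:ℂ) * cE θ) (cE θ))
      (fderiv ℝ (fderiv ℝ u) ((r:ℂ) * cE θ) (cE θ) (cE θ)) r := by
    have h2 : HasDerivAt (fun s : ℝ => fderiv ℝ u ((s:ℂ) * cE θ))
        ((fderiv ℝ (fderiv ℝ u) ((r:ℂ) * cE θ)) (cE θ)) r :=
      (hasFDerivAt_f' hU hu hz).comp_hasDerivAt r h1
    simpa using h2.clm_apply (hasDerivAt_const r (cE θ))
  have hA : HasDerivAt (fun s : ℝ => -(s * Real.log s)) (-(Real.log r + 1)) r := by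
    have := ((hasDerivAt_id r).mul (Real.hasDerivAt_log hr)).neg
    refine this.congr_deriv ?_
    simp [hr]
  have hu' : HasDerivAt (fun s : ℝ => u ((s:ℂ) * cE θ)) (fderiv ℝ u ((r:ℂ) * cE θ) (cE θ)) r :=
    (hasFDerivAt_u hU hu hz).comp_hasDerivAt r h1
  have hsum := (hA.mul hD).add hu'
  refine hsum.congr_deriv ?_
  simp only [gA]
  ring

lemma contOn_id_mul_log : ContinuousOn (fun r : ℝ => r * Real.log r) (Icc 0 1) := by
  intro r hr
  rcases ne_or_eq r 0 with h0 | h0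
  · exact (continuousAt_id.mul (Real.continuousAt_log h0)).continuousWithinAt
  · subst h0
    have hIcc : Icc (0:ℝ) 1 = insert 0 (Ioc 0 1) := by
      ext x
      simp only [mem_Icc, mem_insert_iff, mem_Ioc]
      constructor
      · rintro ⟨h1, h2⟩
        rcases eq_or_lt_of_le h1 with h | h
        · exact Or.inl h.symm
        · exact Or.inr ⟨h, h2⟩
      · rintro (rfl | ⟨h1, h2⟩)
        · exact ⟨le_refl _, zero_le_one⟩
        · exact ⟨h1.le, h2⟩
    have htend : Filter.Tendsto (fun r : ℝ => r * Real.log r) (𝓝[>] 0) (𝓝 0) := by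
      have := tendsto_log_mul_rpow_nhdsGT_zero one_pos
      simpa [Real.rpow_one, mul_comm] using this
    rw [ContinuousWithinAt, hIcc, nhdsWithin_insert]
    simp only [Real.log_zero, mul_zero]
    refine Filter.Tendsto.sup ?_ (htend.mono_left (nhdsWithin_mono _ Ioc_subset_Ioi_self))
    simpa using tendsto_pure_nhds (fun r : ℝ => r * Real.log r) 0

lemma contOn_aux (hU : IsOpen U) (hu : ContDiffOn ℝ 2 u U)
    (hcl : Metric.closedBall (0 : ℂ) 1 ⊆ U) (θ : ℝ) :
    ContinuousOn (fun r : ℝ => fderiv ℝ u ((r:ℂ) * cE θ) (cE θ)) (Icc 0 1) := by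
  have hmap : MapsTo (fun r : ℝ => (r:ℂ) * cE θ) (Icc 0 1) U := by
    intro r hr
    exact hcl (mem_cb (abs_le.mpr ⟨le_trans (by norm_num) hr.1, hr.2⟩))
  have hcont : ContinuousOn (fun r : ℝ => (r:ℂ) * cE θ) (Icc 0 1) :=
    (Complex.continuous_ofReal.mul continuous_const).continuousOn
  exact (((contOn_f' hU hu).comp hcont hmap).clm_apply continuousOn_const)

lemma contOn_Phi (hU : IsOpen U) (hu : ContDiffOn ℝ 2 u U)
    (hcl : Metric.closedBall (0 : ℂ) 1 ⊆ U) (θ : ℝ) :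
    ContinuousOn (Phi u θ) (Icc 0 1) := by
  have hmap : MapsTo (fun r : ℝ => (r:ℂ) * cE θ) (Icc 0 1) U := by
    intro r hr
    exact hcl (mem_cb (abs_le.mpr ⟨le_trans (by norm_num) hr.1, hr.2⟩))
  have hcont : ContinuousOn (fun r : ℝ => (r:ℂ) * cE θ) (Icc 0 1) :=
    (Complex.continuous_ofReal.mul continuous_const).continuousOn
  exact ((contOn_id_mul_log.neg.mul (contOn_aux hU hu hcl θ)).add
    (hu.continuousOn.comp hcont hmap))

lemma intervalIntegrable_neg_log : IntervalIntegrable (fun r : ℝ => -Real.log r) volume 0 1 := by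
  have hcont : ContinuousOn (fun r : ℝ => r - r * Real.log r) (Icc 0 1) :=
    continuousOn_id.sub contOn_id_mul_log
  have hderiv : ∀ r ∈ Ioo (0:ℝ) 1,
      HasDerivAt (fun r : ℝ => r - r * Real.log r) (-Real.log r) r := by
    intro r hr
    have h := (hasDerivAt_id r).sub ((hasDerivAt_id r).mul (Real.hasDerivAt_log hr.1.ne'))
    refine h.congr_deriv ?_
    simp only [id_eq, one_mul]
    rw [mul_inv_cancel₀ hr.1.ne']
    ring
  have hpos : ∀ r ∈ Ioo (0:ℝ) 1, 0 ≤ -Real.log r := fun r hr =>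
    neg_nonneg.mpr (Real.log_nonpos hr.1.le hr.2.le)
  have := intervalIntegral.integrableOn_deriv_of_nonneg hcont hderiv hpos
  rw [intervalIntegrable_iff_integrableOn_Ioc_of_le zero_le_one]
  exact this

lemma ftc_r (hU : IsOpen U) (hu : ContDiffOn ℝ 2 u U)
    (hcl : Metric.closedBall (0 : ℂ) 1 ⊆ U) (θ : ℝ) :
    ∫ r in (0:ℝ)..1, gA u (r, θ) = u (cE θ) - u 0 := by
  have hint : IntervalIntegrable (fun r : ℝ => gA u (r, θ)) volume 0 1 := by
    have h2 : ContinuousOn (fun r : ℝ =>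
        fderiv ℝ u ((r:ℂ) * cE θ) (cE θ)
          + r * fderiv ℝ (fderiv ℝ u) ((r:ℂ) * cE θ) (cE θ) (cE θ)) (Set.uIcc (0:ℝ) 1) := by
      rw [uIcc_of_le zero_le_one]
      have hmap : MapsTo (fun r : ℝ => (r:ℂ) * cE θ) (Icc 0 1) U := by
        intro r hr
        exact hcl (mem_cb (abs_le.mpr ⟨le_trans (by norm_num) hr.1, hr.2⟩))
      have hcont : ContinuousOn (fun r : ℝ => (r:ℂ) * cE θ) (Icc 0 1) :=
        (Complex.continuous_ofReal.mul continuous_const).continuousOn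
      exact (contOn_aux hU hu hcl θ).add (continuousOn_id.mul
        ((((contOn_f'' hU hu).comp hcont hmap).clm_apply continuousOn_const).clm_apply
          continuousOn_const))
    exact intervalIntegrable_neg_log.mul_continuousOn h2
  have heq := intervalIntegral.integral_eq_sub_of_hasDeriv_right_of_le zero_le_one
    (contOn_Phi hU hu hcl θ)
    (fun r hr => ((hasDerivAt_Phi hU hu
      (hcl (mem_cb (abs_le.mpr ⟨le_trans (by norm_num) hr.1.le, hr.2.le⟩))) hr.1.ne').hasDerivWithinAt))
    hint
  rw [heq]
  simp [Phi, Real.log_one]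

lemma continuous_cE : Continuous cE :=
  Complex.continuous_exp.comp (Complex.continuous_ofReal.mul continuous_const)

lemma hasDerivAt_cE (θ : ℝ) : HasDerivAt (fun t : ℝ => cE t) (Complex.I * cE θ) θ := by
  have h0 : HasDerivAt (fun t : ℝ => (t:ℂ) * Complex.I) Complex.I θ :=
    hasDerivAt_line Complex.I θ
  have := h0.cexp
  simpa [cE, mul_comm] using this

lemma ftc_theta (hU : IsOpen U) (hu : ContDiffOn ℝ 2 u U)
    (hcl : Metric.closedBall (0 : ℂ) 1 ⊆ U) {r : ℝ} (hr : r ∈ Ioo (0:ℝ) 1) :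
    ∫ θ in (-Real.pi)..Real.pi, gB u (r, θ) = 0 := by
  have hmemU : ∀ θ : ℝ, ((r:ℂ) * cE θ) ∈ U := fun θ =>
    hcl (mem_cb (abs_le.mpr ⟨by linarith [hr.1], hr.2.le⟩))
  have hzcont : Continuous (fun θ : ℝ => (r:ℂ) * cE θ) := continuous_const.mul continuous_cE
  have key : ∀ θ : ℝ, HasDerivAt
      (fun t : ℝ => (-Real.log r) * (fderiv ℝ u ((r:ℂ) * cE t) (Complex.I * cE t)))
      (gB u (r, θ)) θ := by
    intro θ
    have hz := hmemU θ
    have hz' : HasDerivAt (fun t : ℝ => (r:ℂ) * cE t) ((r:ℂ) * (Complex.I * cE θ)) θ :=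
      (hasDerivAt_cE θ).const_mul (r:ℂ)
    have hf'z : HasDerivAt (fun t : ℝ => fderiv ℝ u ((r:ℂ) * cE t))
        (fderiv ℝ (fderiv ℝ u) ((r:ℂ) * cE θ) ((r:ℂ) * (Complex.I * cE θ))) θ :=
      (hasFDerivAt_f' hU hu hz).comp_hasDerivAt θ hz'
    have he : HasDerivAt (fun t : ℝ => Complex.I * cE t)
        (Complex.I * (Complex.I * cE θ)) θ := (hasDerivAt_cE θ).const_mul Complex.I
    have hcomb := (hf'z.clm_apply he).const_mul (-Real.log r)
    refine hcomb.congr_deriv ?_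
    have e1 : ((r:ℂ) * (Complex.I * cE θ)) = (r:ℝ) • (Complex.I * cE θ) := by
      rw [Complex.real_smul]
    have e2 : Complex.I * (Complex.I * cE θ) = -cE θ := by
      rw [← mul_assoc, Complex.I_mul_I]; ring
    rw [e1, e2, _root_.map_smul, map_neg]
    simp only [gB, ContinuousLinearMap.coe_smul', Pi.smul_apply, smul_eq_mul,
      ContinuousLinearMap.neg_apply, map_neg]
    ring
  have hcontB : Continuous (fun θ : ℝ => gB u (r, θ)) := by
    rw [← continuousOn_univ]
    have hmap : MapsTo (fun θ : ℝ => (r:ℂ) * cE θ) univ U := fun θ _ => hmemU θ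
    have hB : ContinuousOn (fun θ : ℝ =>
        fderiv ℝ (fderiv ℝ u) ((r:ℂ) * cE θ) (Complex.I * cE θ) (Complex.I * cE θ)) univ :=
      (((contOn_f'' hU hu).comp hzcont.continuousOn hmap).clm_apply
        (continuous_const.mul continuous_cE).continuousOn).clm_apply
        (continuous_const.mul continuous_cE).continuousOn
    have hf : ContinuousOn (fun θ : ℝ => fderiv ℝ u ((r:ℂ) * cE θ) (cE θ)) univ :=
      ((contOn_f' hU hu).comp hzcont.continuousOn hmap).clm_apply continuous_cE.continuousOn
    simp only [gB]
    exact continuousOn_const.mul ((continuousOn_const.mul hB).sub hf)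
  have heq := intervalIntegral.integral_eq_sub_of_hasDerivAt (a := -Real.pi) (b := Real.pi)
    (f := fun t : ℝ => (-Real.log r) * (fderiv ℝ u ((r:ℂ) * cE t) (Complex.I * cE t)))
    (fun θ _ => key θ) (hcontB.intervalIntegrable _ _)
  have hE1 : cE Real.pi = -1 := Complex.exp_pi_mul_I
  have hE2 : cE (-Real.pi) = -1 := by
    rw [cE]
    push_cast
    rw [neg_mul, Complex.exp_neg, Complex.exp_pi_mul_I]
    norm_num
  rw [hE1, hE2, sub_self] at heq
  exact heq

/-- The open polar rectangle. -/
def S : Set (ℝ × ℝ) := Ioo (0:ℝ) 1 ×ˢ Ioo (-Real.pi) Real.pi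

lemma S_meas : MeasurableSet S := measurableSet_Ioo.prod measurableSet_Ioo

lemma continuous_zmap : Continuous (fun p : ℝ × ℝ => (p.1 : ℂ) * cE p.2) :=
  (Complex.continuous_ofReal.comp continuous_fst).mul (continuous_cE.comp continuous_snd)

lemma mapsTo_S_U (hcl : Metric.closedBall (0 : ℂ) 1 ⊆ U) :
    MapsTo (fun p : ℝ × ℝ => (p.1 : ℂ) * cE p.2) S U := by
  rintro ⟨r, θ⟩ ⟨hr, _⟩
  exact hcl (mem_cb (abs_le.mpr ⟨by linarith [hr.1], hr.2.le⟩))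

lemma contOn_log_fst : ContinuousOn (fun p : ℝ × ℝ => -Real.log p.1) S := by
  refine ContinuousOn.neg ?_
  refine Real.continuousOn_log.comp continuous_fst.continuousOn ?_
  rintro ⟨r, θ⟩ ⟨hr, _⟩
  exact (ne_of_gt hr.1 : r ≠ 0)

lemma contOn_gA (hU : IsOpen U) (hu : ContDiffOn ℝ 2 u U)
    (hcl : Metric.closedBall (0 : ℂ) 1 ⊆ U) : ContinuousOn (gA u) S := by
  have hf : ContinuousOn (fun p : ℝ × ℝ => fderiv ℝ u ((p.1:ℂ) * cE p.2) (cE p.2)) S :=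
    ((contOn_f' hU hu).comp continuous_zmap.continuousOn (mapsTo_S_U hcl)).clm_apply
      (continuous_cE.comp continuous_snd).continuousOn
  have hB : ContinuousOn (fun p : ℝ × ℝ =>
      fderiv ℝ (fderiv ℝ u) ((p.1:ℂ) * cE p.2) (cE p.2) (cE p.2)) S :=
    (((contOn_f'' hU hu).comp continuous_zmap.continuousOn (mapsTo_S_U hcl)).clm_apply
      (continuous_cE.comp continuous_snd).continuousOn).clm_apply
      (continuous_cE.comp continuous_snd).continuousOn
  exact contOn_log_fst.mul (hf.add (continuous_fst.continuousOn.mul hB))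

lemma contOn_gB (hU : IsOpen U) (hu : ContDiffOn ℝ 2 u U)
    (hcl : Metric.closedBall (0 : ℂ) 1 ⊆ U) : ContinuousOn (gB u) S := by
  have hf : ContinuousOn (fun p : ℝ × ℝ => fderiv ℝ u ((p.1:ℂ) * cE p.2) (cE p.2)) S :=
    ((contOn_f' hU hu).comp continuous_zmap.continuousOn (mapsTo_S_U hcl)).clm_apply
      (continuous_cE.comp continuous_snd).continuousOn
  have hB : ContinuousOn (fun p : ℝ × ℝ =>
      fderiv ℝ (fderiv ℝ u) ((p.1:ℂ) * cE p.2) (Complex.I * cE p.2)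
        (Complex.I * cE p.2)) S :=
    (((contOn_f'' hU hu).comp continuous_zmap.continuousOn (mapsTo_S_U hcl)).clm_apply
      (continuous_const.mul (continuous_cE.comp continuous_snd)).continuousOn).clm_apply
      (continuous_const.mul (continuous_cE.comp continuous_snd)).continuousOn
  exact contOn_log_fst.mul ((continuous_fst.continuousOn.mul hB).sub hf)

lemma integrableOn_neg_log_Ioo : IntegrableOn (fun r : ℝ => -Real.log r) (Ioo 0 1) volume := by
  have h := intervalIntegrable_neg_log
  rw [intervalIntegrable_iff_integrableOn_Ioc_of_le zero_le_one] at h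
  exact h.mono_set Ioo_subset_Ioc_self

lemma integrableOn_S {F : ℝ × ℝ → ℝ} (hFc : ContinuousOn F S) (C : ℝ)
    (hbound : ∀ p ∈ S, |F p| ≤ C * (-Real.log p.1)) : IntegrableOn F S volume := by
  have hdom : Integrable (fun p : ℝ × ℝ => (C * -Real.log p.1) * 1)
      ((volume : Measure (ℝ × ℝ)).restrict S) := by
    rw [S, Measure.volume_eq_prod, ← Measure.prod_restrict]
    exact (integrableOn_neg_log_Ioo.const_mul C).mul_prod (integrable_const 1)
  refine Integrable.mono' hdom (hFc.aestronglyMeasurable S_meas) ?_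
  rw [ae_restrict_iff' S_meas]
  filter_upwards with p hp
  rw [Real.norm_eq_abs, mul_one, mul_neg]
  simpa [mul_neg] using hbound p hp

lemma intOn_gA (hU : IsOpen U) (hu : ContDiffOn ℝ 2 u U)
    (hcl : Metric.closedBall (0 : ℂ) 1 ⊆ U) : IntegrableOn (gA u) S volume := by
  obtain ⟨M1, hM1⟩ := (isCompact_closedBall (0:ℂ) 1).exists_bound_of_continuousOn
    ((contOn_f' hU hu).mono hcl)
  obtain ⟨M2, hM2⟩ := (isCompact_closedBall (0:ℂ) 1).exists_bound_of_continuousOn (f := fderiv ℝ (fderiv ℝ u))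
    ((contOn_f'' hU hu).mono hcl)
  refine integrableOn_S (contOn_gA hU hu hcl) (M1 + M2) ?_
  rintro ⟨r, θ⟩ ⟨hr, hθ⟩
  have hzb : ((r:ℂ) * cE θ) ∈ Metric.closedBall (0:ℂ) 1 :=
    mem_cb (abs_le.mpr ⟨by linarith [hr.1], hr.2.le⟩)
  have hlog : 0 ≤ -Real.log r := neg_nonneg.mpr (Real.log_nonpos hr.1.le hr.2.le)
  have h1 : |fderiv ℝ u ((r:ℂ) * cE θ) (cE θ)| ≤ M1 := by
    have h := (fderiv ℝ u ((r:ℂ) * cE θ)).le_opNorm (cE θ)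
    rw [cE_norm, mul_one] at h
    exact le_trans (by rw [← Real.norm_eq_abs]; exact h) (hM1 _ hzb)
  have h2 : |fderiv ℝ (fderiv ℝ u) ((r:ℂ) * cE θ) (cE θ) (cE θ)| ≤ M2 := by
    have h := (fderiv ℝ (fderiv ℝ u) ((r:ℂ) * cE θ)).le_opNorm₂ (cE θ) (cE θ)
    rw [cE_norm, mul_one, mul_one] at h
    exact le_trans (by rw [← Real.norm_eq_abs]; exact h) (hM2 _ hzb)
  simp only [gA, abs_mul, _root_.abs_of_nonneg hlog]
  rw [mul_comm (M1 + M2) (-Real.log r)]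
  refine mul_le_mul_of_nonneg_left ?_ hlog
  calc |fderiv ℝ u ((r:ℂ) * cE θ) (cE θ)
        + r * fderiv ℝ (fderiv ℝ u) ((r:ℂ) * cE θ) (cE θ) (cE θ)|
      ≤ |fderiv ℝ u ((r:ℂ) * cE θ) (cE θ)|
        + |r| * |fderiv ℝ (fderiv ℝ u) ((r:ℂ) * cE θ) (cE θ) (cE θ)| := by
        rw [← abs_mul]; exact abs_add_le _ _
    _ ≤ M1 + M2 := by
        have hr1 : |r| ≤ 1 := abs_le.mpr ⟨by linarith [hr.1], hr.2.le⟩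
        nlinarith [abs_nonneg (fderiv ℝ (fderiv ℝ u) ((r:ℂ) * cE θ) (cE θ) (cE θ)),
          abs_nonneg r]

lemma intOn_gB (hU : IsOpen U) (hu : ContDiffOn ℝ 2 u U)
    (hcl : Metric.closedBall (0 : ℂ) 1 ⊆ U) : IntegrableOn (gB u) S volume := by
  obtain ⟨M1, hM1⟩ := (isCompact_closedBall (0:ℂ) 1).exists_bound_of_continuousOn
    ((contOn_f' hU hu).mono hcl)
  obtain ⟨M2, hM2⟩ := (isCompact_closedBall (0:ℂ) 1).exists_bound_of_continuousOn (f := fderiv ℝ (fderiv ℝ u))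
    ((contOn_f'' hU hu).mono hcl)
  refine integrableOn_S (contOn_gB hU hu hcl) (M1 + M2) ?_
  rintro ⟨r, θ⟩ ⟨hr, hθ⟩
  have hzb : ((r:ℂ) * cE θ) ∈ Metric.closedBall (0:ℂ) 1 :=
    mem_cb (abs_le.mpr ⟨by linarith [hr.1], hr.2.le⟩)
  have hlog : 0 ≤ -Real.log r := neg_nonneg.mpr (Real.log_nonpos hr.1.le hr.2.le)
  have h1 : |fderiv ℝ u ((r:ℂ) * cE θ) (cE θ)| ≤ M1 := by
    have h := (fderiv ℝ u ((r:ℂ) * cE θ)).le_opNorm (cE θ)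
    rw [cE_norm, mul_one] at h
    exact le_trans (by rw [← Real.norm_eq_abs]; exact h) (hM1 _ hzb)
  have h2 : |fderiv ℝ (fderiv ℝ u) ((r:ℂ) * cE θ) (Complex.I * cE θ) (Complex.I * cE θ)| ≤ M2 := by
    have h := (fderiv ℝ (fderiv ℝ u) ((r:ℂ) * cE θ)).le_opNorm₂ (Complex.I * cE θ)
      (Complex.I * cE θ)
    rw [norm_mul, Complex.norm_I, one_mul, cE_norm, mul_one, mul_one] at h
    exact le_trans (by rw [← Real.norm_eq_abs]; exact h) (hM2 _ hzb)
  simp only [gB, abs_mul, _root_.abs_of_nonneg hlog]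
  rw [mul_comm (M1 + M2) (-Real.log r)]
  refine mul_le_mul_of_nonneg_left ?_ hlog
  calc |r * fderiv ℝ (fderiv ℝ u) ((r:ℂ) * cE θ) (Complex.I * cE θ) (Complex.I * cE θ)
        - fderiv ℝ u ((r:ℂ) * cE θ) (cE θ)|
      ≤ |r| * |fderiv ℝ (fderiv ℝ u) ((r:ℂ) * cE θ) (Complex.I * cE θ) (Complex.I * cE θ)|
        + |fderiv ℝ u ((r:ℂ) * cE θ) (cE θ)| := by
        rw [← abs_mul]; exact abs_sub _ _
    _ ≤ M1 + M2 := by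
        have hr1 : |r| ≤ 1 := abs_le.mpr ⟨by linarith [hr.1], hr.2.le⟩
        nlinarith [abs_nonneg
          (fderiv ℝ (fderiv ℝ u) ((r:ℂ) * cE θ) (Complex.I * cE θ) (Complex.I * cE θ)),
          abs_nonneg r]

lemma polar_symm_eq (p : ℝ × ℝ) : Complex.polarCoord.symm p = (p.1 : ℂ) * cE p.2 := by
  rw [Complex.polarCoord_symm_apply, cE_eq]
  simp only [Complex.real_smul, mul_one]

end

end GreenAux

/-- Green's formula on the disk: for `u` of class `C²` on a neighborhood of the
closed unit disk, `∫_𝕋 u dm − u(0) = ∫_𝔻 Δ̃u dμ`, where `Δ̃ = (1/4)Δ` and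
`dμ = (2/π)log(1/|z|)dxdy`. -/
theorem green_formula_disk (u : ℂ → ℝ) (U : Set ℂ) (hU : IsOpen U)
    (hcl : Metric.closedBall (0 : ℂ) 1 ⊆ U) (hu : ContDiffOn ℝ 2 u U) :
    (∫ θ in (0 : ℝ)..(2 * Real.pi), u (Complex.exp (θ * Complex.I))) / (2 * Real.pi)
        - u 0
      = ∫ z in Metric.ball (0 : ℂ) 1,
          (1 / 4) * lap u z * (2 / Real.pi * Real.log (1 / ‖z‖)) := by
  classical
  have hπ : (0:ℝ) < Real.pi := Real.pi_pos
  open GreenAux in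
  have hpolar : (∫ z in Metric.ball (0:ℂ) 1,
      (1 / 4) * lap u z * (2 / Real.pi * Real.log (1 / ‖z‖)))
      = ∫ p in GreenAux.S, (1/(2*Real.pi)) * (GreenAux.gA u p + GreenAux.gB u p) := by
    have hSsub : GreenAux.S ⊆ polarCoord.target := by
      rw [polarCoord_target]
      exact Set.prod_mono Set.Ioo_subset_Ioi_self subset_rfl
    have hpt : ∀ p ∈ polarCoord.target,
        p.1 • (Metric.ball (0:ℂ) 1).indicator
          (fun z => (1 / 4) * lap u z * (2 / Real.pi * Real.log (1 / ‖z‖)))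
          (Complex.polarCoord.symm p)
        = GreenAux.S.indicator
            (fun q => (1/(2*Real.pi)) * (GreenAux.gA u q + GreenAux.gB u q)) p := by
      rintro ⟨r, θ⟩ hp
      rw [polarCoord_target] at hp
      obtain ⟨hr, hθ⟩ := hp
      have hr0 : (0:ℝ) < r := hr
      have hsymm : Complex.polarCoord.symm (r, θ) = (r:ℂ) * GreenAux.cE θ :=
        GreenAux.polar_symm_eq _
      have hnorm : ‖(r:ℂ) * GreenAux.cE θ‖ = r := by
        rw [norm_mul, GreenAux.cE_norm, mul_one, Complex.norm_real, Real.norm_eq_abs,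
          abs_of_pos hr0]
      rcases lt_or_ge r 1 with h1 | h1
      · have hmemb : ((r:ℂ) * GreenAux.cE θ) ∈ Metric.ball (0:ℂ) 1 := by
          rw [Metric.mem_ball, dist_zero_right, hnorm]; exact h1
        have hmemS : ((r, θ) : ℝ × ℝ) ∈ GreenAux.S := ⟨⟨hr0, h1⟩, hθ⟩
        have hzU : ((r:ℂ) * GreenAux.cE θ) ∈ U :=
          hcl (GreenAux.mem_cb (abs_le.mpr ⟨by linarith, h1.le⟩))
        rw [hsymm, Set.indicator_of_mem hmemb, Set.indicator_of_mem hmemS]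
        have hab := GreenAux.gA_add_gB (p := (r, θ)) hU hu hzU
        simp only at hab
        rw [hab, hnorm, smul_eq_mul, one_div r, Real.log_inv]
        field_simp
        ring
      · have hnb : ((r:ℂ) * GreenAux.cE θ) ∉ Metric.ball (0:ℂ) 1 := by
          rw [Metric.mem_ball, dist_zero_right, hnorm]; exact not_lt.mpr h1
        have hns : ((r, θ) : ℝ × ℝ) ∉ GreenAux.S := fun h => absurd h.1.2 (not_lt.mpr h1)
        rw [hsymm, Set.indicator_of_notMem hnb, Set.indicator_of_notMem hns, smul_zero]
    rw [← MeasureTheory.integral_indicator measurableSet_ball,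
      ← Complex.integral_comp_polarCoord_symm,
      MeasureTheory.setIntegral_congr_fun polarCoord.open_target.measurableSet hpt,
      MeasureTheory.setIntegral_indicator GreenAux.S_meas,
      Set.inter_eq_self_of_subset_right hSsub]
  have hgA := GreenAux.intOn_gA hU hu hcl
  have hgB := GreenAux.intOn_gB hU hu hcl
  have hprod : (volume : Measure (ℝ × ℝ)).restrict GreenAux.S
      = (volume.restrict (Ioo (0:ℝ) 1)).prod (volume.restrict (Ioo (-Real.pi) Real.pi)) := by
    rw [GreenAux.S, Measure.volume_eq_prod, Measure.prod_restrict]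
  have hcontu : Continuous (fun θ : ℝ => u (GreenAux.cE θ)) := by
    rw [← continuousOn_univ]
    refine hu.continuousOn.comp GreenAux.continuous_cE.continuousOn fun θ _ => hcl ?_
    rw [Metric.mem_closedBall, dist_zero_right, GreenAux.cE_norm]
  have hSA : ∫ p in GreenAux.S, GreenAux.gA u p
      = (∫ θ in (-Real.pi)..Real.pi, u (GreenAux.cE θ)) - (2*Real.pi) * u 0 := by
    rw [show (∫ p in GreenAux.S, GreenAux.gA u p)
        = ∫ p, GreenAux.gA u p
            ∂((volume.restrict (Ioo (0:ℝ) 1)).prod (volume.restrict (Ioo (-Real.pi) Real.pi)))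
      from by rw [← hprod]]
    rw [MeasureTheory.integral_prod_symm _ (by rw [← hprod]; exact hgA)]
    have hinner : ∀ θ : ℝ,
        (∫ r in Ioo (0:ℝ) 1, GreenAux.gA u (r, θ)) = u (GreenAux.cE θ) - u 0 := by
      intro θ
      rw [← MeasureTheory.integral_Ioc_eq_integral_Ioo,
        ← intervalIntegral.integral_of_le zero_le_one]
      exact GreenAux.ftc_r hU hu hcl θ
    simp_rw [hinner]
    rw [← MeasureTheory.integral_Ioc_eq_integral_Ioo,
      ← intervalIntegral.integral_of_le (by linarith : -Real.pi ≤ Real.pi)]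
    rw [intervalIntegral.integral_sub (hcontu.intervalIntegrable _ _)
      intervalIntegrable_const]
    rw [intervalIntegral.integral_const, smul_eq_mul]
    ring
  have hSB : ∫ p in GreenAux.S, GreenAux.gB u p = 0 := by
    rw [show (∫ p in GreenAux.S, GreenAux.gB u p)
        = ∫ p, GreenAux.gB u p
            ∂((volume.restrict (Ioo (0:ℝ) 1)).prod (volume.restrict (Ioo (-Real.pi) Real.pi)))
      from by rw [← hprod]]
    rw [MeasureTheory.integral_prod _ (by rw [← hprod]; exact hgB)]
    have hz : EqOn (fun r : ℝ => ∫ θ in Ioo (-Real.pi) Real.pi, GreenAux.gB u (r, θ))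
        (fun _ => (0:ℝ)) (Ioo 0 1) := by
      intro r hr
      simp only
      rw [← MeasureTheory.integral_Ioc_eq_integral_Ioo,
        ← intervalIntegral.integral_of_le (by linarith : -Real.pi ≤ Real.pi)]
      exact GreenAux.ftc_theta hU hu hcl hr
    rw [MeasureTheory.setIntegral_congr_fun measurableSet_Ioo hz]
    simp
  have hper : Function.Periodic (fun θ : ℝ => u (GreenAux.cE θ)) (2*Real.pi) := by
    intro x
    simp only [GreenAux.cE]
    push_cast
    rw [show ((x:ℂ) + 2*(Real.pi:ℂ)) * Complex.I
        = x * Complex.I + 2*Real.pi*Complex.I by ring, Complex.exp_add,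
      Complex.exp_two_pi_mul_I, mul_one]
  have hshift : ∫ θ in (0:ℝ)..(2*Real.pi), u (Complex.exp (θ*Complex.I))
      = ∫ θ in (-Real.pi)..Real.pi, u (GreenAux.cE θ) := by
    have h := hper.intervalIntegral_add_eq 0 (-Real.pi)
    simp only [zero_add] at h
    rw [show -Real.pi + 2*Real.pi = Real.pi by ring] at h
    exact h
  rw [hshift, hpolar, MeasureTheory.integral_const_mul,
    MeasureTheory.integral_add hgA hgB, hSA, hSB, add_zero]
  field_simp
end
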